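/- Finite-horizon likelihood-ratio policy-gradient identity (the core of Proposition 2). Let S and A be nonempty finite types, let P : S → A → S → ℝ satisfy P(s, a, s') ≥ 0 and ∑_{s'} P(s, a, s') = 1 for all s, a, and let π : ℝ → S → A → ℝ be a parameterized policy such that for all s, a the map θ' ↦ π(θ', s, a) is differentiable at θ, π(θ, s, a) > 0, and ∑_a π(θ', s, a) = 1 in a neighborhood of θ. Fix a horizon H ≥ 1, a start state s₀ ∈ S, a reward r : S → A → S → ℝ, and γ ∈ (0,1]. For a path ω = (s₀, a₀, s₁, a₁, …, a_{H−1}, s_H) with the given initial state, let P_θ(ω) = ∏_{t=0}^{H−1} π(θ, s_t, a_t) P(s_t, a_t, s_{t+1}), and let Λ_σ(ω) = d/dθ' [log π(θ', s_σ, a_σ)]|_{θ'=θ}. Then the map θ' ↦ ∑_ω P_{θ'}(ω) ∑_{t=0}^{H−1} γ^t r(s_t, a_t, s_{t+1}) is differentiable at θ with derivative ∑_ω P_θ(ω) ∑_{σ=0}^{H−1} Λ_σ(ω) ∑_{t=σ}^{H−1} γ^t r(s_t, a_t, s_{t+1}). -/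

import Mathlib

open Finset

/-- The state at time `t` along the path `(s₀, a₀, s₁, a₁, …, a_{H−1}, s_H)`
encoded by the start state `s₀` and the tuple `ω : Fin H → A × S` of
action–next-state pairs: `st s₀ ω 0 = s₀` and `st s₀ ω (t+1)` is the state
component of `ω t` for `t < H` (junk value `s₀` beyond the horizon). -/
def st {S A : Type*} (s₀ : S) {H : ℕ} (ω : Fin H → A × S) (t : ℕ) : S :=
  if h : 0 < t ∧ t - 1 < H then (ω ⟨t - 1, h.2⟩).2 else s₀

/-- The action at time `t` along the path encoded by `ω : Fin H → A × S`
(junk value beyond the horizon). -/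
noncomputable def ac {S A : Type*} [Nonempty A] {H : ℕ}
    (ω : Fin H → A × S) (t : ℕ) : A :=
  if h : t < H then (ω ⟨t, h⟩).1 else Classical.arbitrary A

section snoclemmas
variable {S A : Type*} [Nonempty A]

omit [Nonempty A] in
lemma st_snoc (s₀ : S) {n : ℕ} (ω : Fin n → A × S) (x : A × S) {t : ℕ} (ht : t ≤ n) :
    st s₀ (Fin.snoc ω x) t = st s₀ ω t := by
  rcases Nat.eq_zero_or_pos t with h0 | h0
  · simp [st, h0]
  · have h1 : t - 1 < n := by omega
    have h2 : t - 1 < n + 1 := by omega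
    rw [st, st, dif_pos ⟨h0, h2⟩, dif_pos ⟨h0, h1⟩]
    have : (⟨t - 1, h2⟩ : Fin (n + 1)) = Fin.castSucc ⟨t - 1, h1⟩ := rfl
    rw [this, Fin.snoc_castSucc]

omit [Nonempty A] in
lemma st_snoc_last (s₀ : S) {n : ℕ} (ω : Fin n → A × S) (x : A × S) :
    st s₀ (Fin.snoc ω x) (n + 1) = x.2 := by
  rw [st, dif_pos ⟨Nat.succ_pos n, by omega⟩]
  have : (⟨n + 1 - 1, by omega⟩ : Fin (n + 1)) = Fin.last n := rfl
  rw [this, Fin.snoc_last]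

lemma ac_snoc {n : ℕ} (ω : Fin n → A × S) (x : A × S) {t : ℕ} (ht : t < n) :
    ac (Fin.snoc ω x) t = ac ω t := by
  rw [ac, ac, dif_pos (by omega : t < n + 1), dif_pos ht]
  have : (⟨t, by omega⟩ : Fin (n + 1)) = Fin.castSucc ⟨t, ht⟩ := rfl
  rw [this, Fin.snoc_castSucc]

lemma ac_snoc_last {n : ℕ} (ω : Fin n → A × S) (x : A × S) :
    ac (Fin.snoc ω x) n = x.1 := by
  rw [ac, dif_pos (by omega : n < n + 1)]
  have : (⟨n, by omega⟩ : Fin (n + 1)) = Fin.last n := rfl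
  rw [this, Fin.snoc_last]

end snoclemmas

lemma sum_snoc_decomp {γ : Type*} [Fintype γ] {n : ℕ} (f : (Fin (n + 1) → γ) → ℝ) :
    ∑ ω : Fin (n + 1) → γ, f ω = ∑ ω : Fin n → γ, ∑ x : γ, f (Fin.snoc ω x) := by
  rw [← (Fin.snocEquiv (fun _ => γ)).sum_comp, Fintype.sum_prod_type, Finset.sum_comm]
  rfl

lemma vanish {S A : Type*} [Fintype S] [Fintype A] [Nonempty A]
    (P : S → A → S → ℝ) (hP1 : ∀ s a, ∑ s', P s a s' = 1)
    (p : S → A → ℝ) (hpsum : ∀ s, ∑ a, p s a = 1)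
    (Φ : S → A → ℝ) (hΦ : ∀ s, ∑ a, p s a * Φ s a = 0)
    (s₀ : S) (F : ℕ → S → A → S → ℝ) (σ : ℕ) :
    ∀ n, σ < n →
      ∑ ω : Fin n → A × S,
        (∏ t ∈ range n, p (st s₀ ω t) (ac ω t)
            * P (st s₀ ω t) (ac ω t) (st s₀ ω (t + 1)))
          * (Φ (st s₀ ω σ) (ac ω σ)
              * ∑ t ∈ range σ, F t (st s₀ ω t) (ac ω t) (st s₀ ω (t + 1))) = 0 := by
  intro n hn
  induction n, hn using Nat.le_induction with
  | base =>
    rw [sum_snoc_decomp]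
    apply Finset.sum_eq_zero
    intro ω _
    have key : ∀ x : A × S,
        (∏ t ∈ range (σ + 1), p (st s₀ (Fin.snoc ω x) t) (ac (Fin.snoc ω x) t)
            * P (st s₀ (Fin.snoc ω x) t) (ac (Fin.snoc ω x) t) (st s₀ (Fin.snoc ω x) (t + 1)))
          * (Φ (st s₀ (Fin.snoc ω x) σ) (ac (Fin.snoc ω x) σ)
              * ∑ t ∈ range σ, F t (st s₀ (Fin.snoc ω x) t) (ac (Fin.snoc ω x) t)
                  (st s₀ (Fin.snoc ω x) (t + 1)))
        = ((∏ t ∈ range σ, p (st s₀ ω t) (ac ω t)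
              * P (st s₀ ω t) (ac ω t) (st s₀ ω (t + 1)))
            * (p (st s₀ ω σ) x.1 * P (st s₀ ω σ) x.1 x.2))
          * (Φ (st s₀ ω σ) x.1
              * ∑ t ∈ range σ, F t (st s₀ ω t) (ac ω t) (st s₀ ω (t + 1))) := by
      intro x
      rw [prod_range_succ]
      congr 1
      · congr 1
        · exact prod_congr rfl fun t ht => by
            have ht' := mem_range.mp ht
            rw [st_snoc _ _ _ (by omega), st_snoc _ _ _ (by omega), ac_snoc _ _ ht']
        · rw [st_snoc _ _ _ le_rfl, ac_snoc_last, st_snoc_last]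
      · congr 1
        · rw [st_snoc _ _ _ le_rfl, ac_snoc_last]
        · exact sum_congr rfl fun t ht => by
            have ht' := mem_range.mp ht
            rw [st_snoc _ _ _ (by omega), st_snoc _ _ _ (by omega), ac_snoc _ _ (by omega)]
    rw [Finset.sum_congr rfl fun x _ => key x]
    set G := ∏ t ∈ range σ, p (st s₀ ω t) (ac ω t)
        * P (st s₀ ω t) (ac ω t) (st s₀ ω (t + 1)) with hG
    set C := ∑ t ∈ range σ, F t (st s₀ ω t) (ac ω t) (st s₀ ω (t + 1)) with hC
    set s := st s₀ ω σ with hs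
    rw [Fintype.sum_prod_type]
    have h4 : ∀ a : A, ∑ s' : S, G * (p s a * P s a s') * (Φ s a * C)
        = (G * C) * (p s a * Φ s a) := by
      intro a
      calc ∑ s' : S, G * (p s a * P s a s') * (Φ s a * C)
          = ∑ s' : S, ((G * C) * (p s a * Φ s a)) * P s a s' :=
            Finset.sum_congr rfl fun s' _ => by ring
        _ = ((G * C) * (p s a * Φ s a)) * ∑ s' : S, P s a s' := (Finset.mul_sum _ _ _).symm
        _ = (G * C) * (p s a * Φ s a) := by rw [hP1, mul_one]
    calc ∑ a : A, ∑ s' : S, G * (p s a * P s a s') * (Φ s a * C)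
        = ∑ a : A, (G * C) * (p s a * Φ s a) := Finset.sum_congr rfl fun a _ => h4 a
      _ = (G * C) * ∑ a : A, p s a * Φ s a := (Finset.mul_sum _ _ _).symm
      _ = 0 := by rw [hΦ, mul_zero]
  | succ n hn ih =>
    rw [sum_snoc_decomp]
    have key : ∀ (ω : Fin n → A × S) (x : A × S),
        (∏ t ∈ range (n + 1), p (st s₀ (Fin.snoc ω x) t) (ac (Fin.snoc ω x) t)
            * P (st s₀ (Fin.snoc ω x) t) (ac (Fin.snoc ω x) t) (st s₀ (Fin.snoc ω x) (t + 1)))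
          * (Φ (st s₀ (Fin.snoc ω x) σ) (ac (Fin.snoc ω x) σ)
              * ∑ t ∈ range σ, F t (st s₀ (Fin.snoc ω x) t) (ac (Fin.snoc ω x) t)
                  (st s₀ (Fin.snoc ω x) (t + 1)))
        = ((∏ t ∈ range n, p (st s₀ ω t) (ac ω t)
              * P (st s₀ ω t) (ac ω t) (st s₀ ω (t + 1)))
            * (Φ (st s₀ ω σ) (ac ω σ)
                * ∑ t ∈ range σ, F t (st s₀ ω t) (ac ω t) (st s₀ ω (t + 1))))
          * (p (st s₀ ω n) x.1 * P (st s₀ ω n) x.1 x.2) := by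
      intro ω x
      rw [prod_range_succ]
      have e1 : ∏ t ∈ range n, p (st s₀ (Fin.snoc ω x) t) (ac (Fin.snoc ω x) t)
            * P (st s₀ (Fin.snoc ω x) t) (ac (Fin.snoc ω x) t) (st s₀ (Fin.snoc ω x) (t + 1))
          = ∏ t ∈ range n, p (st s₀ ω t) (ac ω t)
            * P (st s₀ ω t) (ac ω t) (st s₀ ω (t + 1)) :=
        prod_congr rfl fun t ht => by
          have ht' := mem_range.mp ht
          rw [st_snoc _ _ _ (by omega), st_snoc _ _ _ (by omega), ac_snoc _ _ ht']
      have e2 : ∑ t ∈ range σ, F t (st s₀ (Fin.snoc ω x) t) (ac (Fin.snoc ω x) t)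
            (st s₀ (Fin.snoc ω x) (t + 1))
          = ∑ t ∈ range σ, F t (st s₀ ω t) (ac ω t) (st s₀ ω (t + 1)) :=
        sum_congr rfl fun t ht => by
          have ht' := mem_range.mp ht
          rw [st_snoc _ _ _ (by omega), st_snoc _ _ _ (by omega), ac_snoc _ _ (by omega)]
      rw [e1, e2, st_snoc _ _ _ (le_of_lt hn), ac_snoc _ _ hn,
        st_snoc _ _ _ le_rfl, ac_snoc_last, st_snoc_last]
      ring
    calc ∑ ω : Fin n → A × S, ∑ x : A × S, _
        = ∑ ω : Fin n → A × S,
            ((∏ t ∈ range n, p (st s₀ ω t) (ac ω t)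
                * P (st s₀ ω t) (ac ω t) (st s₀ ω (t + 1)))
              * (Φ (st s₀ ω σ) (ac ω σ)
                  * ∑ t ∈ range σ, F t (st s₀ ω t) (ac ω t) (st s₀ ω (t + 1)))) := by
          refine Finset.sum_congr rfl fun ω _ => ?_
          rw [Finset.sum_congr rfl fun x _ => key ω x]
          set B := (∏ t ∈ range n, p (st s₀ ω t) (ac ω t)
              * P (st s₀ ω t) (ac ω t) (st s₀ ω (t + 1)))
            * (Φ (st s₀ ω σ) (ac ω σ)
                * ∑ t ∈ range σ, F t (st s₀ ω t) (ac ω t) (st s₀ ω (t + 1)))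
          set s := st s₀ ω n
          calc ∑ x : A × S, B * (p s x.1 * P s x.1 x.2)
              = ∑ a : A, ∑ s' : S, B * (p s a * P s a s') := Fintype.sum_prod_type _
            _ = ∑ a : A, B * p s a := by
                refine Finset.sum_congr rfl fun a _ => ?_
                rw [show (fun s' => B * (p s a * P s a s'))
                    = fun s' => (B * p s a) * P s a s' from funext fun s' => by ring]
                rw [show ∑ s' : S, (B * p s a) * P s a s'
                    = (B * p s a) * ∑ s' : S, P s a s' from (Finset.mul_sum _ _ _).symm,
                  hP1, mul_one]
            _ = B * ∑ a : A, p s a := (Finset.mul_sum _ _ _).symm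
            _ = B := by rw [hpsum, mul_one]
      _ = 0 := ih

/-- **Finite-horizon likelihood-ratio policy-gradient identity (Proposition 2, core).**
For a finite MDP with transition probabilities `P`, a parameterized policy `π`
that is differentiable and positive at `θ` and properly normalized near `θ`,
horizon `H ≥ 1`, start state `s₀`, reward `r` and discount `γ ∈ (0,1]`, the map
`θ' ↦ ∑_ω P_{θ'}(ω) ∑_{t<H} γ^t r(s_t, a_t, s_{t+1})` is differentiable at `θ`
with derivative
`∑_ω P_θ(ω) ∑_{σ<H} Λ_σ(ω) ∑_{t=σ}^{H−1} γ^t r(s_t, a_t, s_{t+1})`, where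
`P_θ(ω) = ∏_{t<H} π(θ, s_t, a_t) P(s_t, a_t, s_{t+1})` and
`Λ_σ(ω) = d/dθ' log π(θ', s_σ, a_σ) |_{θ'=θ}`. -/
theorem likelihood_ratio_policy_gradient
    {S A : Type*} [Fintype S] [Nonempty S] [Fintype A] [Nonempty A]
    (P : S → A → S → ℝ)
    (hP0 : ∀ s a s', 0 ≤ P s a s') (hP1 : ∀ s a, ∑ s', P s a s' = 1)
    (π : ℝ → S → A → ℝ) (θ : ℝ)
    (hπdiff : ∀ s a, DifferentiableAt ℝ (fun θ' => π θ' s a) θ)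
    (hπpos : ∀ s a, 0 < π θ s a)
    (hπsum : ∀ᶠ θ' in nhds θ, ∀ s, ∑ a, π θ' s a = 1)
    (H : ℕ) (hH : 1 ≤ H) (s₀ : S) (r : S → A → S → ℝ)
    (γ : ℝ) (hγ : γ ∈ Set.Ioc (0 : ℝ) 1) :
    HasDerivAt
      (fun θ' => ∑ ω : Fin H → A × S,
        (∏ t ∈ range H, π θ' (st s₀ ω t) (ac ω t)
            * P (st s₀ ω t) (ac ω t) (st s₀ ω (t + 1)))
          * ∑ t ∈ range H, γ ^ t * r (st s₀ ω t) (ac ω t) (st s₀ ω (t + 1)))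
      (∑ ω : Fin H → A × S,
        (∏ t ∈ range H, π θ (st s₀ ω t) (ac ω t)
            * P (st s₀ ω t) (ac ω t) (st s₀ ω (t + 1)))
          * ∑ σ ∈ range H,
              (deriv (fun θ' => Real.log (π θ' (st s₀ ω σ) (ac ω σ))) θ)
                * ∑ t ∈ Finset.Ico σ H,
                    γ ^ t * r (st s₀ ω t) (ac ω t) (st s₀ ω (t + 1)))
      θ := by
  classical
  set d : S → A → ℝ := fun s a => deriv (fun θ' => π θ' s a) θ with hd_def
  have hd : ∀ s a, HasDerivAt (fun θ' => π θ' s a) (d s a) θ :=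
    fun s a => (hπdiff s a).hasDerivAt
  have hπne : ∀ s a, π θ s a ≠ 0 := fun s a => (hπpos s a).ne'
  have hlog : ∀ s a, deriv (fun θ' => Real.log (π θ' s a)) θ = d s a / π θ s a :=
    fun s a => ((hd s a).log (hπne s a)).deriv
  have hπθ : ∀ s, ∑ a, π θ s a = 1 := hπsum.self_of_nhds
  have hdsum : ∀ s, ∑ a, d s a = 0 := by
    intro s
    have h1 : HasDerivAt (fun θ' => ∑ a, π θ' s a) (∑ a, d s a) θ :=
      HasDerivAt.fun_sum fun a _ => hd s a
    have h2 : HasDerivAt (fun _ : ℝ => (1 : ℝ)) (∑ a, d s a) θ :=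
      h1.congr_of_eventuallyEq (hπsum.mono fun θ' h => (h s).symm)
    exact h2.unique (hasDerivAt_const θ 1)
  have hΦ : ∀ s, ∑ a, π θ s a * (d s a / π θ s a) = 0 := by
    intro s
    have : ∀ a, π θ s a * (d s a / π θ s a) = d s a := fun a => by
      rw [mul_comm, div_mul_cancel₀ _ (hπne s a)]
    rw [Finset.sum_congr rfl fun a _ => this a, hdsum]
  -- derivative of each path probability
  have hprod : ∀ ω : Fin H → A × S,
      HasDerivAt
        (fun θ' => ∏ t ∈ range H, π θ' (st s₀ ω t) (ac ω t)
            * P (st s₀ ω t) (ac ω t) (st s₀ ω (t + 1)))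
        (∑ σ ∈ range H,
          (∏ t ∈ (range H).erase σ, π θ (st s₀ ω t) (ac ω t)
              * P (st s₀ ω t) (ac ω t) (st s₀ ω (t + 1)))
            * (d (st s₀ ω σ) (ac ω σ)
                * P (st s₀ ω σ) (ac ω σ) (st s₀ ω (σ + 1)))) θ := by
    intro ω
    have := HasDerivAt.fun_finsetProd (u := range H) (x := θ)
      (f := fun t θ' => π θ' (st s₀ ω t) (ac ω t)
          * P (st s₀ ω t) (ac ω t) (st s₀ ω (t + 1)))
      (f' := fun t => d (st s₀ ω t) (ac ω t)
          * P (st s₀ ω t) (ac ω t) (st s₀ ω (t + 1)))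
      (fun t _ => (hd _ _).mul_const _)
    simpa [smul_eq_mul] using this
  have hmain : HasDerivAt
      (fun θ' => ∑ ω : Fin H → A × S,
        (∏ t ∈ range H, π θ' (st s₀ ω t) (ac ω t)
            * P (st s₀ ω t) (ac ω t) (st s₀ ω (t + 1)))
          * ∑ t ∈ range H, γ ^ t * r (st s₀ ω t) (ac ω t) (st s₀ ω (t + 1)))
      (∑ ω : Fin H → A × S,
        (∑ σ ∈ range H,
          (∏ t ∈ (range H).erase σ, π θ (st s₀ ω t) (ac ω t)
              * P (st s₀ ω t) (ac ω t) (st s₀ ω (t + 1)))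
            * (d (st s₀ ω σ) (ac ω σ)
                * P (st s₀ ω σ) (ac ω σ) (st s₀ ω (σ + 1))))
          * ∑ t ∈ range H, γ ^ t * r (st s₀ ω t) (ac ω t) (st s₀ ω (t + 1))) θ :=
    HasDerivAt.fun_sum fun ω _ => (hprod ω).mul_const _
  -- identify the derivative with the stated one
  have keyE : (∑ ω : Fin H → A × S,
        (∑ σ ∈ range H,
          (∏ t ∈ (range H).erase σ, π θ (st s₀ ω t) (ac ω t)
              * P (st s₀ ω t) (ac ω t) (st s₀ ω (t + 1)))
            * (d (st s₀ ω σ) (ac ω σ)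
                * P (st s₀ ω σ) (ac ω σ) (st s₀ ω (σ + 1))))
          * ∑ t ∈ range H, γ ^ t * r (st s₀ ω t) (ac ω t) (st s₀ ω (t + 1)))
      = ∑ ω : Fin H → A × S,
        (∏ t ∈ range H, π θ (st s₀ ω t) (ac ω t)
            * P (st s₀ ω t) (ac ω t) (st s₀ ω (t + 1)))
          * ∑ σ ∈ range H,
              (deriv (fun θ' => Real.log (π θ' (st s₀ ω σ) (ac ω σ))) θ)
                * ∑ t ∈ Finset.Ico σ H,
                    γ ^ t * r (st s₀ ω t) (ac ω t) (st s₀ ω (t + 1)) := by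
    calc ∑ ω : Fin H → A × S,
        (∑ σ ∈ range H,
          (∏ t ∈ (range H).erase σ, π θ (st s₀ ω t) (ac ω t)
              * P (st s₀ ω t) (ac ω t) (st s₀ ω (t + 1)))
            * (d (st s₀ ω σ) (ac ω σ)
                * P (st s₀ ω σ) (ac ω σ) (st s₀ ω (σ + 1))))
          * ∑ t ∈ range H, γ ^ t * r (st s₀ ω t) (ac ω t) (st s₀ ω (t + 1))
        = ∑ ω : Fin H → A × S,
            ((∑ σ ∈ range H,
              ((∏ t ∈ range H, π θ (st s₀ ω t) (ac ω t)
                  * P (st s₀ ω t) (ac ω t) (st s₀ ω (t + 1)))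
                * (d (st s₀ ω σ) (ac ω σ) / π θ (st s₀ ω σ) (ac ω σ)
                    * ∑ t ∈ range σ, γ ^ t * r (st s₀ ω t) (ac ω t) (st s₀ ω (t + 1)))))
            + (∑ σ ∈ range H,
              ((∏ t ∈ range H, π θ (st s₀ ω t) (ac ω t)
                  * P (st s₀ ω t) (ac ω t) (st s₀ ω (t + 1)))
                * (d (st s₀ ω σ) (ac ω σ) / π θ (st s₀ ω σ) (ac ω σ)
                    * ∑ t ∈ Finset.Ico σ H, γ ^ t * r (st s₀ ω t) (ac ω t) (st s₀ ω (t + 1)))))) := by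
          refine Finset.sum_congr rfl fun ω _ => ?_
          rw [Finset.sum_mul, ← Finset.sum_add_distrib]
          refine Finset.sum_congr rfl fun σ hσ => ?_
          have hσH := mem_range.mp hσ
          have hsplit : ∑ t ∈ range H, γ ^ t * r (st s₀ ω t) (ac ω t) (st s₀ ω (t + 1))
              = (∑ t ∈ range σ, γ ^ t * r (st s₀ ω t) (ac ω t) (st s₀ ω (t + 1)))
                + ∑ t ∈ Finset.Ico σ H, γ ^ t * r (st s₀ ω t) (ac ω t) (st s₀ ω (t + 1)) := by
            exact (Finset.sum_range_add_sum_Ico _ hσH.le).symm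
          have hGq : (∏ t ∈ (range H).erase σ, π θ (st s₀ ω t) (ac ω t)
                * P (st s₀ ω t) (ac ω t) (st s₀ ω (t + 1)))
              * (d (st s₀ ω σ) (ac ω σ) * P (st s₀ ω σ) (ac ω σ) (st s₀ ω (σ + 1)))
              = (∏ t ∈ range H, π θ (st s₀ ω t) (ac ω t)
                  * P (st s₀ ω t) (ac ω t) (st s₀ ω (t + 1)))
                * (d (st s₀ ω σ) (ac ω σ) / π θ (st s₀ ω σ) (ac ω σ)) := by
            rw [← Finset.mul_prod_erase (range H) _ (mem_range.mpr hσH)]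
            have hne := hπne (st s₀ ω σ) (ac ω σ)
            field_simp
          rw [hsplit, hGq]
          ring
      _ = ∑ ω : Fin H → A × S,
        (∏ t ∈ range H, π θ (st s₀ ω t) (ac ω t)
            * P (st s₀ ω t) (ac ω t) (st s₀ ω (t + 1)))
          * ∑ σ ∈ range H,
              (deriv (fun θ' => Real.log (π θ' (st s₀ ω σ) (ac ω σ))) θ)
                * ∑ t ∈ Finset.Ico σ H,
                    γ ^ t * r (st s₀ ω t) (ac ω t) (st s₀ ω (t + 1)) := by
          rw [Finset.sum_add_distrib]
          have hzero : ∑ ω : Fin H → A × S, ∑ σ ∈ range H,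
              ((∏ t ∈ range H, π θ (st s₀ ω t) (ac ω t)
                  * P (st s₀ ω t) (ac ω t) (st s₀ ω (t + 1)))
                * (d (st s₀ ω σ) (ac ω σ) / π θ (st s₀ ω σ) (ac ω σ)
                    * ∑ t ∈ range σ, γ ^ t * r (st s₀ ω t) (ac ω t) (st s₀ ω (t + 1)))) = 0 := by
            rw [Finset.sum_comm]
            refine Finset.sum_eq_zero fun σ hσ => ?_
            exact vanish P hP1 (π θ) hπθ
              (fun s a => d s a / π θ s a) hΦ s₀
              (fun t s a s' => γ ^ t * r s a s') σ H (mem_range.mp hσ)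
          rw [hzero, zero_add]
          refine Finset.sum_congr rfl fun ω _ => ?_
          rw [Finset.mul_sum]
          refine Finset.sum_congr rfl fun σ hσ => ?_
          rw [hlog]
  rw [← keyE]
  exact hmain
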